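/- Two small diagrams F : I → K and G : J → K in a category K are bisimilar if and only if they are related by a span of open maps in the category diag(K) of all small diagrams in K. -/

import Mathlib

/- STATEMENT 11: Two small diagrams F : I ⥤ K and G : J ⥤ K are bisimilar if and only
if they are related by a span of open maps in the category diag(K) of all small
diagrams in K. -/

open CategoryTheory

universe w v u

variable {K : Type u} [Category.{v} K]

/-- A map `(f, μ) : F → G` in `diag(K)` is open if `f` is surjective on objects, every
morphism `f(i) ⟶ j'` lifts to a morphism `i ⟶ j` with `f(j) = j'`, and `μ` is a
natural isomorphism. -/
def IsOpenDiagMap {I : Type*} [Category I] {J : Type*} [Category J]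
    (F : I ⥤ K) (G : J ⥤ K) (f : I ⥤ J) (μ : F ⟶ f ⋙ G) : Prop :=
  Function.Surjective f.obj ∧
    (∀ (i : I) (j' : J) (ψ : f.obj i ⟶ j'),
      ∃ (j : I) (φ : i ⟶ j) (h : f.obj j = j'), f.map φ ≫ eqToHom h = ψ) ∧
    IsIso μ

/-- Bisimilarity of two diagrams: there is a set of triples `(i, η, j)` with
`η : F(i) ≅ G(j)` covering all objects of both index categories and satisfying the
forward and backward transfer properties. -/
def Bisimilar {I : Type*} [Category I] {J : Type*} [Category J]
    (F : I ⥤ K) (G : J ⥤ K) : Prop :=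
  ∃ R : Set ((i : I) × (j : J) × (F.obj i ≅ G.obj j)),
    (∀ i : I, ∃ p ∈ R, p.1 = i) ∧
    (∀ j : J, ∃ p ∈ R, p.2.1 = j) ∧
    (∀ (i : I) (j : J) (η : F.obj i ≅ G.obj j), ⟨i, j, η⟩ ∈ R →
      ∀ (i' : I) (φ : i ⟶ i'),
        ∃ (j' : J) (η' : F.obj i' ≅ G.obj j') (ψ : j ⟶ j'),
          ⟨i', j', η'⟩ ∈ R ∧ F.map φ ≫ η'.hom = η.hom ≫ G.map ψ) ∧
    (∀ (i : I) (j : J) (η : F.obj i ≅ G.obj j), ⟨i, j, η⟩ ∈ R →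
      ∀ (j' : J) (ψ : j ⟶ j'),
        ∃ (i' : I) (η' : F.obj i' ≅ G.obj j') (φ : i ⟶ i'),
          ⟨i', j', η'⟩ ∈ R ∧ F.map φ ≫ η'.hom = η.hom ≫ G.map ψ)

namespace BisimAux

variable {K : Type u} [Category.{v} K] {I J : Type w} [SmallCategory I] [SmallCategory J]

/-- Terms indexing the objects of the span category. -/
inductive BT (I J : Type w) [SmallCategory I] [SmallCategory J] : Type w
  | si : I → BT I J
  | sj : J → BT I J
  | fwd : BT I J → (i : I) → (i' : I) → (i ⟶ i') → BT I J
  | bwd : BT I J → (j : J) → (j' : J) → (j ⟶ j') → BT I J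

/-- A bundled bisimulation. -/
structure Bisim (F : I ⥤ K) (G : J ⥤ K) : Type (max w v) where
  R : Set ((i : I) × (j : J) × (F.obj i ≅ G.obj j))
  h1 : ∀ i : I, ∃ p ∈ R, p.1 = i
  h2 : ∀ j : J, ∃ p ∈ R, p.2.1 = j
  h3 : ∀ (i : I) (j : J) (η : F.obj i ≅ G.obj j), ⟨i, j, η⟩ ∈ R →
      ∀ (i' : I) (φ : i ⟶ i'),
        ∃ (j' : J) (η' : F.obj i' ≅ G.obj j') (ψ : j ⟶ j'),
          ⟨i', j', η'⟩ ∈ R ∧ F.map φ ≫ η'.hom = η.hom ≫ G.map ψ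
  h4 : ∀ (i : I) (j : J) (η : F.obj i ≅ G.obj j), ⟨i, j, η⟩ ∈ R →
      ∀ (j' : J) (ψ : j ⟶ j'),
        ∃ (i' : I) (η' : F.obj i' ≅ G.obj j') (φ : i ⟶ i'),
          ⟨i', j', η'⟩ ∈ R ∧ F.map φ ≫ η'.hom = η.hom ≫ G.map ψ

namespace Bisim

variable {F : I ⥤ K} {G : J ⥤ K} (B : Bisim F G)

noncomputable def fJ (i : I) (j : J) (η : F.obj i ≅ G.obj j) (hm : ⟨i, j, η⟩ ∈ B.R)
    {i' : I} (φ : i ⟶ i') : J := (B.h3 i j η hm i' φ).choose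

noncomputable def fη (i : I) (j : J) (η : F.obj i ≅ G.obj j) (hm : ⟨i, j, η⟩ ∈ B.R)
    {i' : I} (φ : i ⟶ i') : F.obj i' ≅ G.obj (B.fJ i j η hm φ) :=
  (B.h3 i j η hm i' φ).choose_spec.choose

noncomputable def fψ (i : I) (j : J) (η : F.obj i ≅ G.obj j) (hm : ⟨i, j, η⟩ ∈ B.R)
    {i' : I} (φ : i ⟶ i') : j ⟶ B.fJ i j η hm φ :=
  (B.h3 i j η hm i' φ).choose_spec.choose_spec.choose

lemma f_mem (i : I) (j : J) (η : F.obj i ≅ G.obj j) (hm : ⟨i, j, η⟩ ∈ B.R)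
    {i' : I} (φ : i ⟶ i') : ⟨i', B.fJ i j η hm φ, B.fη i j η hm φ⟩ ∈ B.R :=
  (B.h3 i j η hm i' φ).choose_spec.choose_spec.choose_spec.1

lemma f_sq (i : I) (j : J) (η : F.obj i ≅ G.obj j) (hm : ⟨i, j, η⟩ ∈ B.R)
    {i' : I} (φ : i ⟶ i') :
    F.map φ ≫ (B.fη i j η hm φ).hom = η.hom ≫ G.map (B.fψ i j η hm φ) :=
  (B.h3 i j η hm i' φ).choose_spec.choose_spec.choose_spec.2

noncomputable def bI (i : I) (j : J) (η : F.obj i ≅ G.obj j) (hm : ⟨i, j, η⟩ ∈ B.R)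
    {j' : J} (ψ : j ⟶ j') : I := (B.h4 i j η hm j' ψ).choose

noncomputable def bη (i : I) (j : J) (η : F.obj i ≅ G.obj j) (hm : ⟨i, j, η⟩ ∈ B.R)
    {j' : J} (ψ : j ⟶ j') : F.obj (B.bI i j η hm ψ) ≅ G.obj j' :=
  (B.h4 i j η hm j' ψ).choose_spec.choose

noncomputable def bφ (i : I) (j : J) (η : F.obj i ≅ G.obj j) (hm : ⟨i, j, η⟩ ∈ B.R)
    {j' : J} (ψ : j ⟶ j') : i ⟶ B.bI i j η hm ψ :=
  (B.h4 i j η hm j' ψ).choose_spec.choose_spec.choose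

lemma b_mem (i : I) (j : J) (η : F.obj i ≅ G.obj j) (hm : ⟨i, j, η⟩ ∈ B.R)
    {j' : J} (ψ : j ⟶ j') : ⟨B.bI i j η hm ψ, j', B.bη i j η hm ψ⟩ ∈ B.R :=
  (B.h4 i j η hm j' ψ).choose_spec.choose_spec.choose_spec.1

lemma b_sq (i : I) (j : J) (η : F.obj i ≅ G.obj j) (hm : ⟨i, j, η⟩ ∈ B.R)
    {j' : J} (ψ : j ⟶ j') :
    F.map (B.bφ i j η hm ψ) ≫ (B.bη i j η hm ψ).hom = η.hom ≫ G.map ψ :=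
  (B.h4 i j η hm j' ψ).choose_spec.choose_spec.choose_spec.2

open Classical in
noncomputable def interp : BT I J → {p // p ∈ B.R}
  | .si i => ⟨(B.h1 i).choose, (B.h1 i).choose_spec.1⟩
  | .sj j => ⟨(B.h2 j).choose, (B.h2 j).choose_spec.1⟩
  | .fwd t i i' φ =>
      let q := interp t
      if h : q.1.1 = i then
        ⟨⟨i', B.fJ q.1.1 q.1.2.1 q.1.2.2 q.2 (eqToHom h ≫ φ),
            B.fη q.1.1 q.1.2.1 q.1.2.2 q.2 (eqToHom h ≫ φ)⟩,
          B.f_mem q.1.1 q.1.2.1 q.1.2.2 q.2 (eqToHom h ≫ φ)⟩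
      else q
  | .bwd t j j' ψ =>
      let q := interp t
      if h : q.1.2.1 = j then
        ⟨⟨B.bI q.1.1 q.1.2.1 q.1.2.2 q.2 (eqToHom h ≫ ψ), j',
            B.bη q.1.1 q.1.2.1 q.1.2.2 q.2 (eqToHom h ≫ ψ)⟩,
          B.b_mem q.1.1 q.1.2.1 q.1.2.2 q.2 (eqToHom h ≫ ψ)⟩
      else q

lemma interp_si (i : I) : (B.interp (.si i)).1.1 = i := (B.h1 i).choose_spec.2

lemma interp_sj (j : J) : (B.interp (.sj j)).1.2.1 = j := (B.h2 j).choose_spec.2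

lemma interp_fwd (t : BT I J) (i i' : I) (φ : i ⟶ i') (h : (B.interp t).1.1 = i) :
    B.interp (.fwd t i i' φ) =
      ⟨⟨i', B.fJ (B.interp t).1.1 (B.interp t).1.2.1 (B.interp t).1.2.2 (B.interp t).2
            (eqToHom h ≫ φ),
          B.fη (B.interp t).1.1 (B.interp t).1.2.1 (B.interp t).1.2.2 (B.interp t).2
            (eqToHom h ≫ φ)⟩,
        B.f_mem (B.interp t).1.1 (B.interp t).1.2.1 (B.interp t).1.2.2 (B.interp t).2
            (eqToHom h ≫ φ)⟩ := by
  rw [interp]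
  rw [dif_pos h]

lemma interp_bwd (t : BT I J) (j j' : J) (ψ : j ⟶ j') (h : (B.interp t).1.2.1 = j) :
    B.interp (.bwd t j j' ψ) =
      ⟨⟨B.bI (B.interp t).1.1 (B.interp t).1.2.1 (B.interp t).1.2.2 (B.interp t).2
            (eqToHom h ≫ ψ), j',
          B.bη (B.interp t).1.1 (B.interp t).1.2.1 (B.interp t).1.2.2 (B.interp t).2
            (eqToHom h ≫ ψ)⟩,
        B.b_mem (B.interp t).1.1 (B.interp t).1.2.1 (B.interp t).1.2.2 (B.interp t).2
            (eqToHom h ≫ ψ)⟩ := by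
  rw [interp]
  rw [dif_pos h]


lemma sigma_iso_hom {p q : (i : I) × (j : J) × (F.obj i ≅ G.obj j)} (e : p = q) :
    p.2.2.hom = eqToHom (show F.obj p.1 = F.obj q.1 by rw [e]) ≫ q.2.2.hom ≫
      eqToHom (show G.obj q.2.1 = G.obj p.2.1 by rw [e]) := by
  subst e; simp

end Bisim

/-- Objects of the span category. -/
structure LObj {F : I ⥤ K} {G : J ⥤ K} (B : Bisim F G) : Type w where
  t : BT I J

/-- Morphisms of the span category. -/
@[ext] structure LHom {F : I ⥤ K} {G : J ⥤ K} {B : Bisim F G} (x y : LObj B) : Type w where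
  φ : (B.interp x.t).1.1 ⟶ (B.interp y.t).1.1
  ψ : (B.interp x.t).1.2.1 ⟶ (B.interp y.t).1.2.1
  sq : F.map φ ≫ (B.interp y.t).1.2.2.hom = (B.interp x.t).1.2.2.hom ≫ G.map ψ

variable {F : I ⥤ K} {G : J ⥤ K} {B : Bisim F G}

noncomputable instance : Category (LObj B) where
  Hom x y := LHom x y
  id x := ⟨𝟙 _, 𝟙 _, by simp⟩
  comp m n := ⟨m.φ ≫ n.φ, m.ψ ≫ n.ψ, by
    rw [F.map_comp, G.map_comp, Category.assoc, n.sq, ← Category.assoc, m.sq,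
      Category.assoc]⟩
  id_comp m := by apply LHom.ext <;> simp
  comp_id m := by apply LHom.ext <;> simp
  assoc m n o := by apply LHom.ext <;> simp

@[simp] lemma id_φ (x : LObj B) : (𝟙 x : LHom x x).φ = 𝟙 _ := rfl
@[simp] lemma id_ψ (x : LObj B) : (𝟙 x : LHom x x).ψ = 𝟙 _ := rfl
@[simp] lemma comp_φ {x y z : LObj B} (m : x ⟶ y) (n : y ⟶ z) :
    (m ≫ n).φ = m.φ ≫ n.φ := rfl
@[simp] lemma comp_ψ {x y z : LObj B} (m : x ⟶ y) (n : y ⟶ z) :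
    (m ≫ n).ψ = m.ψ ≫ n.ψ := rfl

variable (B)

/-- The left leg of the span. -/
noncomputable def fF : LObj B ⥤ I where
  obj x := (B.interp x.t).1.1
  map m := m.φ
  map_id _ := rfl
  map_comp _ _ := rfl

/-- The right leg of the span. -/
noncomputable def gF : LObj B ⥤ J where
  obj x := (B.interp x.t).1.2.1
  map m := m.ψ
  map_id _ := rfl
  map_comp _ _ := rfl

@[simp] lemma fF_map {x y : LObj B} (m : x ⟶ y) : (fF B).map m = m.φ := rfl
@[simp] lemma gF_map {x y : LObj B} (m : x ⟶ y) : (gF B).map m = m.ψ := rfl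

/-- The natural transformation from `H = fF ⋙ F` to `gF ⋙ G`. -/
noncomputable def νT : fF B ⋙ F ⟶ gF B ⋙ G where
  app x := (B.interp x.t).1.2.2.hom
  naturality _ _ m := m.sq

instance (x : LObj B) : IsIso ((νT B).app x) :=
  ⟨⟨(B.interp x.t).1.2.2.inv, (B.interp x.t).1.2.2.hom_inv_id, (B.interp x.t).1.2.2.inv_hom_id⟩⟩

instance isIso_νT : IsIso (νT B) := NatIso.isIso_of_isIso_app _

variable {B}

/-- A constructor for `LHom` from data along an identification of the target. -/
noncomputable def homOfEq (x y : LObj B) (a : I) (b : J) (η : F.obj a ≅ G.obj b)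
    (e : (B.interp y.t).1 = ⟨a, b, η⟩)
    (φ : (B.interp x.t).1.1 ⟶ a) (ψ : (B.interp x.t).1.2.1 ⟶ b)
    (sq : F.map φ ≫ η.hom = (B.interp x.t).1.2.2.hom ≫ G.map ψ) : x ⟶ y :=
  { φ := φ ≫ eqToHom (show a = (B.interp y.t).1.1 by rw [e])
    ψ := ψ ≫ eqToHom (show b = (B.interp y.t).1.2.1 by rw [e])
    sq := by
      rw [Bisim.sigma_iso_hom e]
      simp only [Functor.map_comp, eqToHom_map, Category.assoc, eqToHom_trans_assoc,
        eqToHom_refl, Category.id_comp]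
      rw [reassoc_of% sq] }

@[simp] lemma homOfEq_φ (x y : LObj B) (a b η) (e) (φ) (ψ) (sq) :
    (homOfEq x y a b η e φ ψ sq).φ = φ ≫ eqToHom (show a = (B.interp y.t).1.1 by rw [e]) :=
  rfl

@[simp] lemma homOfEq_ψ (x y : LObj B) (a b η) (e) (φ) (ψ) (sq) :
    (homOfEq x y a b η e φ ψ sq).ψ = ψ ≫ eqToHom (show b = (B.interp y.t).1.2.1 by rw [e]) :=
  rfl

end BisimAux


/-- Two small diagrams are bisimilar iff they are related by a span of open maps. -/
theorem bisimilar_iff_span_of_open {I J : Type w} [SmallCategory I] [SmallCategory J]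
    (F : I ⥤ K) (G : J ⥤ K) :
    Bisimilar F G ↔
      ∃ (L : Cat.{w, w}) (H : L ⥤ K) (f : L ⥤ I) (μ : H ⟶ f ⋙ F)
        (g : L ⥤ J) (ν : H ⟶ g ⋙ G),
        IsOpenDiagMap H F f μ ∧ IsOpenDiagMap H G g ν := by
  constructor
  · rintro ⟨R, h1, h2, h3, h4⟩
    let B : BisimAux.Bisim F G := ⟨R, h1, h2, h3, h4⟩
    refine ⟨Cat.of (BisimAux.LObj B), BisimAux.fF B ⋙ F, BisimAux.fF B, 𝟙 _,
      BisimAux.gF B, BisimAux.νT B, ⟨?_, ?_, inferInstance⟩,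
      ⟨?_, ?_, BisimAux.isIso_νT B⟩⟩
    · intro i; exact ⟨⟨.si i⟩, B.interp_si i⟩
    · intro x i' φ
      let t' : BisimAux.LObj B := ⟨.fwd x.t (B.interp x.t).1.1 i' φ⟩
      have e : (B.interp t'.t).1 =
          ⟨i', B.fJ (B.interp x.t).1.1 (B.interp x.t).1.2.1 (B.interp x.t).1.2.2
            (B.interp x.t).2 (eqToHom rfl ≫ φ),
          B.fη (B.interp x.t).1.1 (B.interp x.t).1.2.1 (B.interp x.t).1.2.2
            (B.interp x.t).2 (eqToHom rfl ≫ φ)⟩ :=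
        congrArg Subtype.val (B.interp_fwd x.t (B.interp x.t).1.1 i' φ rfl)
      refine ⟨t', BisimAux.homOfEq x t' i'
          (B.fJ (B.interp x.t).1.1 (B.interp x.t).1.2.1 (B.interp x.t).1.2.2
            (B.interp x.t).2 (eqToHom rfl ≫ φ))
          (B.fη (B.interp x.t).1.1 (B.interp x.t).1.2.1 (B.interp x.t).1.2.2
            (B.interp x.t).2 (eqToHom rfl ≫ φ))
          e φ
          (B.fψ (B.interp x.t).1.1 (B.interp x.t).1.2.1 (B.interp x.t).1.2.2
            (B.interp x.t).2 (eqToHom rfl ≫ φ))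
          ?_, congrArg Sigma.fst e, ?_⟩
      · refine Eq.trans ?_ (B.f_sq (B.interp x.t).1.1 (B.interp x.t).1.2.1
          (B.interp x.t).1.2.2 (B.interp x.t).2 (eqToHom rfl ≫ φ))
        congr 1
        exact congrArg F.map (Category.id_comp φ).symm
      · erw [BisimAux.fF_map, BisimAux.homOfEq_φ]
        erw [Category.assoc, eqToHom_trans, eqToHom_refl, Category.comp_id]
    · intro j; exact ⟨⟨.sj j⟩, B.interp_sj j⟩
    · intro x j' ψ
      let t' : BisimAux.LObj B := ⟨.bwd x.t (B.interp x.t).1.2.1 j' ψ⟩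
      have e : (B.interp t'.t).1 =
          ⟨B.bI (B.interp x.t).1.1 (B.interp x.t).1.2.1 (B.interp x.t).1.2.2
            (B.interp x.t).2 (eqToHom rfl ≫ ψ), j',
          B.bη (B.interp x.t).1.1 (B.interp x.t).1.2.1 (B.interp x.t).1.2.2
            (B.interp x.t).2 (eqToHom rfl ≫ ψ)⟩ :=
        congrArg Subtype.val (B.interp_bwd x.t (B.interp x.t).1.2.1 j' ψ rfl)
      refine ⟨t', BisimAux.homOfEq x t'
          (B.bI (B.interp x.t).1.1 (B.interp x.t).1.2.1 (B.interp x.t).1.2.2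
            (B.interp x.t).2 (eqToHom rfl ≫ ψ))
          j'
          (B.bη (B.interp x.t).1.1 (B.interp x.t).1.2.1 (B.interp x.t).1.2.2
            (B.interp x.t).2 (eqToHom rfl ≫ ψ))
          e
          (B.bφ (B.interp x.t).1.1 (B.interp x.t).1.2.1 (B.interp x.t).1.2.2
            (B.interp x.t).2 (eqToHom rfl ≫ ψ))
          ψ ?_, congrArg (fun p => p.2.1) e, ?_⟩
      · refine Eq.trans (B.b_sq (B.interp x.t).1.1 (B.interp x.t).1.2.1
          (B.interp x.t).1.2.2 (B.interp x.t).2 (eqToHom rfl ≫ ψ)) ?_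
        congr 1
        exact congrArg G.map (Category.id_comp ψ)
      · erw [BisimAux.gF_map, BisimAux.homOfEq_ψ]
        erw [Category.assoc, eqToHom_trans, eqToHom_refl, Category.comp_id]
  · rintro ⟨L, H, f, μ, g, ν, ⟨fsurj, flift, fiso⟩, ⟨gsurj, glift, giso⟩⟩
    haveI := fiso
    haveI := giso
    let iso : ∀ l : L, F.obj (f.obj l) ≅ G.obj (g.obj l) := fun l =>
      (asIso (μ.app l)).symm ≪≫ asIso (ν.app l)
    have isoHom : ∀ l : L, (iso l).hom = inv (μ.app l) ≫ ν.app l := fun l => rfl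
    refine ⟨Set.range fun l : L =>
        (⟨f.obj l, g.obj l, iso l⟩ : (i : I) × (j : J) × (F.obj i ≅ G.obj j)),
      ?_, ?_, ?_, ?_⟩
    · intro i
      obtain ⟨l, hl⟩ := fsurj i
      exact ⟨⟨f.obj l, g.obj l, iso l⟩, ⟨l, rfl⟩, hl⟩
    · intro j
      obtain ⟨l, hl⟩ := gsurj j
      exact ⟨⟨f.obj l, g.obj l, iso l⟩, ⟨l, rfl⟩, hl⟩
    · rintro i j η ⟨l, hl⟩ i' φ
      injection hl with hi htail
      subst hi
      have htail' := eq_of_heq htail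
      injection htail' with hj htail2
      subst hj
      have hη := eq_of_heq htail2
      subst hη
      obtain ⟨l', φt, hl', hcomm⟩ := flift l i' φ
      subst hl'
      have hφ : f.map φt = φ := by simpa using hcomm
      subst hφ
      refine ⟨g.obj l', iso l', g.map φt, ⟨l', rfl⟩, ?_⟩
      have n1 := μ.naturality φt
      have n2 := ν.naturality φt
      simp only [Functor.comp_map] at n1 n2
      rw [isoHom, isoHom]
      have key : F.map (f.map φt) ≫ inv (μ.app l') = inv (μ.app l) ≫ H.map φt := by
        rw [IsIso.comp_inv_eq, Category.assoc, IsIso.eq_inv_comp]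
        exact n1.symm
      rw [← Category.assoc, key, Category.assoc, n2, Category.assoc]
    · rintro i j η ⟨l, hl⟩ j' ψ
      injection hl with hi htail
      subst hi
      have htail' := eq_of_heq htail
      injection htail' with hj htail2
      subst hj
      have hη := eq_of_heq htail2
      subst hη
      obtain ⟨l', ψt, hl', hcomm⟩ := glift l j' ψ
      subst hl'
      have hψ : g.map ψt = ψ := by simpa using hcomm
      subst hψ
      refine ⟨f.obj l', iso l', f.map ψt, ⟨l', rfl⟩, ?_⟩
      have n1 := μ.naturality ψt
      have n2 := ν.naturality ψt
      simp only [Functor.comp_map] at n1 n2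
      rw [isoHom, isoHom]
      have key : F.map (f.map ψt) ≫ inv (μ.app l') = inv (μ.app l) ≫ H.map ψt := by
        rw [IsIso.comp_inv_eq, Category.assoc, IsIso.eq_inv_comp]
        exact n1.symm
      rw [← Category.assoc, key, Category.assoc, n2, Category.assoc]
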